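/- Let a, b ∈ ℤ with a ≠ 0, b > 0 and a² < 6b (and a² ≠ 4b). Then every minimizer x ∈ ℤ⁴ ∖ {0} of Q(x) = (a² − 2b)(x₁²+x₂²+x₃²+x₄²) + 4b(x₁x₃+x₂x₄) satisfies x₂ = −x₄ and x₁ = −x₃ or lies in the 2-dimensional subspace spanned by (1,0,−1,0) and (0,1,0,−1); in particular the set of minimal vectors does not span ℝ⁴. -/
import Mathlib

lemma int_one_le_sq {x : ℤ} (h : x ≠ 0) : 1 ≤ x ^ 2 := by
  have h1 : 1 ≤ |x| := Int.one_le_abs h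
  nlinarith [sq_abs x]

theorem stmt_18 (a b : ℤ) (ha : a ≠ 0) (hb : 0 < b) (h4b : 4 * b < a ^ 2) (h6b : a ^ 2 < 6 * b) :
    ∀ x₁ x₂ x₃ x₄ : ℤ, ¬(x₁ = 0 ∧ x₂ = 0 ∧ x₃ = 0 ∧ x₄ = 0) →
      (∀ y₁ y₂ y₃ y₄ : ℤ, ¬(y₁ = 0 ∧ y₂ = 0 ∧ y₃ = 0 ∧ y₄ = 0) →
        (a ^ 2 - 2 * b) * (x₁ ^ 2 + x₂ ^ 2 + x₃ ^ 2 + x₄ ^ 2) +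
            4 * b * (x₁ * x₃ + x₂ * x₄) ≤
          (a ^ 2 - 2 * b) * (y₁ ^ 2 + y₂ ^ 2 + y₃ ^ 2 + y₄ ^ 2) +
            4 * b * (y₁ * y₃ + y₂ * y₄)) →
      (x₁ = -x₃ ∧ x₂ = -x₄) := by
  intro x₁ x₂ x₃ x₄ hx hmin
  have h1 := hmin 1 0 (-1) 0 (by norm_num)
  have hc : 0 < a ^ 2 - 4 * b := by linarith
  -- rewrite Q(x) via the identity
  have hQ : (a ^ 2 - 4 * b) * (x₁ ^ 2 + x₂ ^ 2 + x₃ ^ 2 + x₄ ^ 2)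
      + 2 * b * ((x₁ + x₃) ^ 2 + (x₂ + x₄) ^ 2) ≤ 2 * (a ^ 2 - 4 * b) := by
    linarith [h1]
  have hs : 1 ≤ x₁ ^ 2 + x₂ ^ 2 + x₃ ^ 2 + x₄ ^ 2 := by
    have hne : x₁ ≠ 0 ∨ x₂ ≠ 0 ∨ x₃ ≠ 0 ∨ x₄ ≠ 0 := by tauto
    rcases hne with h | h | h | h <;>
      have := int_one_le_sq h <;>
      linarith [sq_nonneg x₁, sq_nonneg x₂, sq_nonneg x₃, sq_nonneg x₄]
  have hcs : (a ^ 2 - 4 * b) * 1 ≤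
      (a ^ 2 - 4 * b) * (x₁ ^ 2 + x₂ ^ 2 + x₃ ^ 2 + x₄ ^ 2) :=
    mul_le_mul_of_nonneg_left hs hc.le
  have h13 : x₁ + x₃ = 0 := by
    by_contra h
    have h2 := int_one_le_sq h
    have hb2 : 2 * b * 1 ≤ 2 * b * ((x₁ + x₃) ^ 2) :=
      mul_le_mul_of_nonneg_left h2 (by linarith)
    have h24 : 0 ≤ 2 * b * ((x₂ + x₄) ^ 2) := by positivity
    linarith
  have h24 : x₂ + x₄ = 0 := by
    by_contra h
    have h2 := int_one_le_sq h
    have hb2 : 2 * b * 1 ≤ 2 * b * ((x₂ + x₄) ^ 2) :=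
      mul_le_mul_of_nonneg_left h2 (by linarith)
    have h13 : 0 ≤ 2 * b * ((x₁ + x₃) ^ 2) := by positivity
    linarith
  constructor <;> omega
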